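/- Let κ = (κ₁,…,κₙ) ∈ Γ_k with κ₁ ≥ κ₂ ≥ ⋯ ≥ κₙ. Then σ_k(κ) ≤ C(n,k)·κ₁κ₂⋯κ_k, where C(n,k) is the binomial coefficient 'n choose k'. -/

import Mathlib

noncomputable def esymm (n k : ℕ) (κ : Fin n → ℝ) : ℝ :=
  ∑ s ∈ Finset.powersetCard k (Finset.univ : Finset (Fin n)), ∏ i ∈ s, κ i

noncomputable def esymm1 (n m : ℕ) (κ : Fin n → ℝ) (i : Fin n) : ℝ :=
  ∑ s ∈ Finset.powersetCard m ((Finset.univ : Finset (Fin n)).erase i), ∏ j ∈ s, κ j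

noncomputable def esymm2 (n m : ℕ) (κ : Fin n → ℝ) (i j : Fin n) : ℝ :=
  ∑ s ∈ Finset.powersetCard m (((Finset.univ : Finset (Fin n)).erase i).erase j), ∏ l ∈ s, κ l

def GardingCone (n k : ℕ) : Set (Fin n → ℝ) :=
  {κ | ∀ m, 1 ≤ m → m ≤ k → 0 < esymm n m κ}



open Finset Polynomial
set_option linter.unusedSectionVars false

variable {ι : Type*} [DecidableEq ι]

noncomputable def ee (S : Finset ι) (m : ℕ) (κ : ι → ℝ) : ℝ :=
  ∑ t ∈ S.powersetCard m, ∏ i ∈ t, κ i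

lemma ee_zero (S : Finset ι) (κ : ι → ℝ) : ee S 0 κ = 1 := by
  simp [ee]

lemma ee_of_card_lt {S : Finset ι} {m : ℕ} (h : S.card < m) (κ : ι → ℝ) : ee S m κ = 0 := by
  rw [ee, Finset.powersetCard_eq_empty.2 h, Finset.sum_empty]

lemma ee_self (S : Finset ι) (κ : ι → ℝ) : ee S S.card κ = ∏ i ∈ S, κ i := by
  rw [ee, Finset.powersetCard_self, Finset.sum_singleton]

lemma ee_insert {S : Finset ι} {i : ι} (h : i ∉ S) (m : ℕ) (κ : ι → ℝ) :
    ee (insert i S) (m + 1) κ = κ i * ee S m κ + ee S (m + 1) κ := by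
  rw [ee, Finset.powersetCard_succ_insert h, Finset.sum_union, add_comm]
  · congr 1
    rw [Finset.sum_image, ee, Finset.mul_sum]
    · refine Finset.sum_congr rfl fun t ht => ?_
      rw [Finset.mem_powersetCard] at ht
      rw [Finset.prod_insert (fun hc => h (ht.1 hc))]
    · intro t ht u hu he
      rw [Finset.mem_coe, Finset.mem_powersetCard] at ht hu
      have : ∀ v : Finset ι, v ⊆ S → (insert i v).erase i = v := fun v hv => by
        rw [Finset.erase_insert (fun hc => h (hv hc))]
      rw [← this t ht.1, ← this u hu.1, he]
  · rw [Finset.disjoint_left]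
    intro t ht hti
    rw [Finset.mem_powersetCard] at ht
    rw [Finset.mem_image] at hti
    obtain ⟨u, hu, rfl⟩ := hti
    exact h (ht.1 (Finset.mem_insert_self i u))

lemma ee_erase {S : Finset ι} {i : ι} (h : i ∈ S) (m : ℕ) (κ : ι → ℝ) :
    ee S (m + 1) κ = κ i * ee (S.erase i) m κ + ee (S.erase i) (m + 1) κ := by
  conv_lhs => rw [← Finset.insert_erase h]
  exact ee_insert (Finset.notMem_erase i S) m κ

lemma ee_ones (S : Finset ι) (m : ℕ) : ee S m (fun _ => (1 : ℝ)) = S.card.choose m := by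
  simp [ee, Finset.card_powersetCard]

lemma ee_smul (S : Finset ι) (m : ℕ) (c : ℝ) (κ : ι → ℝ) :
    ee S m (fun i => c * κ i) = c ^ m * ee S m κ := by
  rw [ee, ee, Finset.mul_sum]
  refine Finset.sum_congr rfl fun t ht => ?_
  rw [Finset.mem_powersetCard] at ht
  rw [Finset.prod_mul_distrib, Finset.prod_const, ht.2]

lemma ee_one (S : Finset ι) (κ : ι → ℝ) : ee S 1 κ = ∑ i ∈ S, κ i := by
  induction S using Finset.induction_on with
  | empty => simp [ee_of_card_lt (show (∅ : Finset ι).card < 1 by simp)]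
  | @insert a S' h ih =>
      have e1 : ee (insert a S') 1 κ = κ a * ee S' 0 κ + ee S' 1 κ := ee_insert h 0 κ
      rw [e1, ee_zero, ih, Finset.sum_insert h]
      ring

lemma ee_two (S : Finset ι) (κ : ι → ℝ) :
    2 * ee S 2 κ = (∑ i ∈ S, κ i) ^ 2 - ∑ i ∈ S, (κ i) ^ 2 := by
  induction S using Finset.induction_on with
  | empty => simp [ee_of_card_lt (show (∅ : Finset ι).card < 2 by simp)]
  | @insert a S' h ih =>
      have e1 : ee (insert a S') 2 κ = κ a * ee S' 1 κ + ee S' 2 κ := ee_insert h 1 κ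
      rw [e1, ee_one, Finset.sum_insert h, Finset.sum_insert h]
      nlinarith [ih]
lemma ee_compl_inv {d : ℕ} (r : Fin d → ℝ) (hr : ∀ i, r i ≠ 0) {j : ℕ} (hj : j ≤ d) :
    ee (Finset.univ : Finset (Fin d)) (d - j) r
      = (∏ i, r i) * ee Finset.univ j (fun i => (r i)⁻¹) := by
  rw [ee, ee, Finset.mul_sum]
  refine Finset.sum_nbij' (fun t => tᶜ) (fun t => tᶜ) ?_ ?_ ?_ ?_ ?_
  · intro t ht
    rw [Finset.mem_powersetCard_univ] at ht ⊢
    rw [Finset.card_compl, ht, Fintype.card_fin]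
    omega
  · intro t ht
    rw [Finset.mem_powersetCard_univ] at ht ⊢
    rw [Finset.card_compl, ht, Fintype.card_fin]
  · intro t _; exact compl_compl t
  · intro t _; exact compl_compl t
  · intro t ht
    rw [Finset.mem_powersetCard_univ] at ht
    have hsplit : (∏ i ∈ t, r i) * (∏ i ∈ tᶜ, r i) = ∏ i, r i :=
      Finset.prod_mul_prod_compl t r
    have hne : (∏ i ∈ tᶜ, r i) ≠ 0 := Finset.prod_ne_zero_iff.2 fun i _ => hr i
    rw [Finset.prod_inv_distrib, ← hsplit, mul_assoc, mul_inv_cancel₀ hne, mul_one]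

lemma newton_key {d : ℕ} (hd : 2 ≤ d) (r : Fin d → ℝ)
    (h1 : ee (Finset.univ : Finset (Fin d)) (d - 1) r = 0) :
    ee (Finset.univ : Finset (Fin d)) d r * ee Finset.univ (d - 2) r ≤ 0 := by
  have hcard : (Finset.univ : Finset (Fin d)).card = d := by simp
  by_cases hz : ∃ i, r i = 0
  · obtain ⟨i, hi⟩ := hz
    have h0 := ee_self (Finset.univ : Finset (Fin d)) r
    rw [hcard] at h0
    rw [h0, Finset.prod_eq_zero (Finset.mem_univ i) hi, zero_mul]
  · push_neg at hz
    set s : Fin d → ℝ := fun i => (r i)⁻¹ with hs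
    have hPr : (∏ i, r i) ≠ 0 := Finset.prod_ne_zero_iff.2 fun i _ => hz i
    have h1' : (∏ i, r i) * ee Finset.univ 1 s = 0 := by
      rw [← ee_compl_inv r hz (by omega : 1 ≤ d)]; exact h1
    have hE1 : ee (Finset.univ : Finset (Fin d)) 1 s = 0 := by
      rcases mul_eq_zero.1 h1' with h | h
      · exact absurd h hPr
      · exact h
    have hsum : ∑ i, s i = 0 := by rw [← ee_one]; exact hE1
    have hE2 : 2 * ee (Finset.univ : Finset (Fin d)) 2 s = - ∑ i, (s i) ^ 2 := by
      rw [ee_two, hsum]; ring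
    have hE2' : ee (Finset.univ : Finset (Fin d)) 2 s ≤ 0 := by
      have : (0:ℝ) ≤ ∑ i, (s i)^2 := Finset.sum_nonneg fun i _ => sq_nonneg _
      linarith
    have hd2 : ee (Finset.univ : Finset (Fin d)) (d - 2) r
        = (∏ i, r i) * ee Finset.univ 2 s := ee_compl_inv r hz hd
    have hdd := ee_self (Finset.univ : Finset (Fin d)) r
    rw [hcard] at hdd
    rw [hdd, hd2]
    nlinarith [sq_nonneg (∏ i, r i)]
noncomputable def PP (S : Finset ι) (κ : ι → ℝ) : Polynomial ℝ :=
  ∏ i ∈ S, (Polynomial.X + Polynomial.C (κ i))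

lemma PP_monic (S : Finset ι) (κ : ι → ℝ) : (PP S κ).Monic :=
  Polynomial.monic_prod_of_monic _ _ fun i _ => Polynomial.monic_X_add_C (κ i)

lemma PP_ne_zero (S : Finset ι) (κ : ι → ℝ) : PP S κ ≠ 0 := (PP_monic S κ).ne_zero

lemma PP_natDegree (S : Finset ι) (κ : ι → ℝ) : (PP S κ).natDegree = S.card := by
  rw [PP, Polynomial.natDegree_prod _ _ (fun i _ => Polynomial.X_add_C_ne_zero (κ i))]
  simp [Polynomial.natDegree_X_add_C]

lemma PP_coeff {S : Finset ι} {m : ℕ} (h : m ≤ S.card) (κ : ι → ℝ) :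
    (PP S κ).coeff (S.card - m) = ee S m κ := by
  rw [PP, Finset.prod_X_add_C_coeff S κ (Nat.sub_le _ _), Nat.sub_sub_self h, ee]

lemma PP_roots (S : Finset ι) (κ : ι → ℝ) :
    (PP S κ).roots = S.val.map (fun i => -κ i) := by
  have : PP S κ = (Multiset.map (fun a => Polynomial.X - Polynomial.C a)
      (S.val.map fun i => -κ i)).prod := by
    rw [PP, Multiset.map_map, Finset.prod_eq_multiset_prod]
    congr 1
    refine Multiset.map_congr rfl fun i _ => ?_
    simp [sub_eq_add_neg]
  rw [this, Polynomial.roots_multiset_prod_X_sub_C]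

lemma PP_card_roots (S : Finset ι) (κ : ι → ℝ) :
    Multiset.card (PP S κ).roots = (PP S κ).natDegree := by
  rw [PP_roots, PP_natDegree, Multiset.card_map]
  rfl

/-- real-rootedness is preserved by the derivative. -/
lemma rr_derivative {p : Polynomial ℝ} (hp : Multiset.card p.roots = p.natDegree) :
    Multiset.card (Polynomial.derivative p).roots = (Polynomial.derivative p).natDegree
      ∧ (Polynomial.derivative p).natDegree = p.natDegree - 1 := by
  by_cases h0 : p.natDegree = 0
  · have : Polynomial.derivative p = 0 := by
      rw [Polynomial.eq_C_of_natDegree_eq_zero h0, Polynomial.derivative_C]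
    simp [this, h0]
  · have h1 : Multiset.card (Polynomial.derivative p).roots + 1 ≥ p.natDegree := by
      rw [← hp]; exact Polynomial.card_roots_le_derivative p
    have h2 : Multiset.card (Polynomial.derivative p).roots
        ≤ (Polynomial.derivative p).natDegree := Polynomial.card_roots' _
    have h3 : (Polynomial.derivative p).natDegree ≤ p.natDegree - 1 :=
      Polynomial.natDegree_derivative_le p
    omega

lemma rr_iterate {p : Polynomial ℝ} (hp : Multiset.card p.roots = p.natDegree) (j : ℕ) :
    Multiset.card ((Polynomial.derivative)^[j] p).roots = ((Polynomial.derivative)^[j] p).natDegree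
      ∧ ((Polynomial.derivative)^[j] p).natDegree = p.natDegree - j := by
  induction j with
  | zero => simp [hp]
  | succ j ih =>
      rw [Function.iterate_succ_apply']
      obtain ⟨ih1, ih2⟩ := ih
      obtain ⟨a, b⟩ := rr_derivative ih1
      exact ⟨a, by omega⟩

lemma multiset_esymm_fin (R : Multiset ℝ) :
    ∃ (d : ℕ) (r : Fin d → ℝ), Multiset.card R = d ∧
      ∀ j, R.esymm j = ee (Finset.univ : Finset (Fin d)) j r := by
  refine ⟨R.toList.length, R.toList.get, (Multiset.length_toList R).symm, fun j => ?_⟩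
  · have h1 : ((Finset.univ : Finset (Fin R.toList.length)).val.map R.toList.get) = ↑R.toList := by
      rw [Fin.univ_val_map, List.ofFn_get]
    have := Finset.esymm_map_val R.toList.get (Finset.univ : Finset (Fin R.toList.length)) j
    rw [h1] at this
    rw [Multiset.coe_toList] at this
    exact this

lemma coeff_nonpos_of_realRooted {p : Polynomial ℝ}
    (hrr : Multiset.card p.roots = p.natDegree) (hd : 2 ≤ p.natDegree)
    (h1 : p.coeff 1 = 0) (h2 : 0 < p.coeff 2) : p.coeff 0 ≤ 0 := by
  set d := p.natDegree with hdd
  have hd2 : 2 ≤ p.natDegree := hd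
  have hp0 : p ≠ 0 := by
    intro h
    rw [h, Polynomial.natDegree_zero] at hd2
    omega
  have hc : p.leadingCoeff ≠ 0 := Polynomial.leadingCoeff_ne_zero.2 hp0
  have c0 := Polynomial.coeff_eq_esymm_roots_of_card hrr (show 0 ≤ d by omega)
  have c1 := Polynomial.coeff_eq_esymm_roots_of_card hrr (show 1 ≤ d by omega)
  have c2 := Polynomial.coeff_eq_esymm_roots_of_card hrr (show 2 ≤ d by omega)
  have hes1 : p.roots.esymm (d - 1) = 0 := by
    rw [h1] at c1
    have := c1.symm
    rcases mul_eq_zero.1 this with h | h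
    · rcases mul_eq_zero.1 h with h' | h'
      · exact absurd h' hc
      · exact absurd h' (pow_ne_zero _ (by norm_num))
    · exact h
  obtain ⟨d', r, hcard, hes⟩ := multiset_esymm_fin p.roots
  have hd' : d' = d := by rw [← hcard, hrr]
  subst hd'
  have hkey : p.roots.esymm d * p.roots.esymm (d - 2) ≤ 0 := by
    rw [hes, hes]
    exact newton_key hd r (by rw [← hes]; exact hes1)
  -- coeff 0 * coeff 2 = c^2 * esymm d * esymm (d-2) ≥ via signs
  rw [← hdd] at c0 c2
  rw [Nat.sub_zero] at c0
  have hsign : p.coeff 0 * p.coeff 2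
      = p.leadingCoeff ^ 2 * ((-1) ^ (d - 0) * (-1) ^ (d - 2))
        * (p.roots.esymm d * p.roots.esymm (d - 2)) := by
    rw [c0, c2, Nat.sub_zero]
    ring
  have hpow : ((-1 : ℝ)) ^ (d - 0) * (-1) ^ (d - 2) = 1 := by
    have h2' : d - 0 = (d - 2) + 2 := by omega
    rw [h2', pow_add, neg_one_sq, mul_one, ← pow_add]
    exact Even.neg_one_pow ⟨d - 2, by ring⟩
  rw [hpow, mul_one] at hsign
  have hfin : p.coeff 0 * p.coeff 2 ≤ 0 := by
    rw [hsign]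
    exact mul_nonpos_of_nonneg_of_nonpos (sq_nonneg _) hkey
  by_contra hcon
  push_neg at hcon
  have := mul_pos hcon h2
  linarith
def Gam (S : Finset ι) (k : ℕ) (κ : ι → ℝ) : Prop :=
  ∀ m, 1 ≤ m → m ≤ k → 0 < ee S m κ

lemma Gam_mono {S : Finset ι} {k k' : ℕ} {κ : ι → ℝ} (h : k' ≤ k) (hG : Gam S k κ) :
    Gam S k' κ := fun m h1 h2 => hG m h1 (h2.trans h)

lemma Gam_le_card {S : Finset ι} {k : ℕ} {κ : ι → ℝ} (hG : Gam S k κ) (hk : 1 ≤ k) :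
    k ≤ S.card := by
  by_contra h
  push_neg at h
  have := hG k hk le_rfl
  rw [ee_of_card_lt h] at this
  exact lt_irrefl _ this

lemma PP_shift (S : Finset ι) (κ : ι → ℝ) (t : ℝ) :
    PP S (fun i => κ i + t) = Polynomial.taylor t (PP S κ) := by
  rw [PP, PP, ← Polynomial.taylorAlgHom_apply, map_prod]
  refine Finset.prod_congr rfl fun i _ => ?_
  rw [Polynomial.taylorAlgHom_apply, Polynomial.taylor_apply, Polynomial.add_comp,
    Polynomial.X_comp, Polynomial.C_comp, Polynomial.C_add]
  ring

lemma ee_shift {S : Finset ι} {k : ℕ} {κ : ι → ℝ} (hG : Gam S k κ) {t : ℝ} (ht : 0 ≤ t)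
    {m : ℕ} (hm1 : 1 ≤ m) (hmk : m ≤ k) : ee S m κ ≤ ee S m (fun i => κ i + t) := by
  have hkS : k ≤ S.card := Gam_le_card hG (hm1.trans hmk)
  have hmS : m ≤ S.card := hmk.trans hkS
  have h1 : ee S m (fun i => κ i + t) = (Polynomial.taylor t (PP S κ)).coeff (S.card - m) := by
    rw [← PP_shift, PP_coeff hmS]
  rw [h1, Polynomial.taylor_coeff]
  set q := Polynomial.hasseDeriv (S.card - m) (PP S κ) with hq
  have hnn : ∀ j, 0 ≤ q.coeff j := by
    intro j
    rw [hq, Polynomial.hasseDeriv_coeff]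
    rcases le_or_gt j m with hj | hj
    · have heq : j + (S.card - m) = S.card - (m - j) := by omega
      rw [heq, PP_coeff (by omega)]
      rcases Nat.eq_zero_or_pos (m - j) with h0 | h0
      · rw [h0, ee_zero]
        positivity
      · have := hG (m - j) h0 (by omega)
        positivity
    · have : (PP S κ).coeff (j + (S.card - m)) = 0 := by
        apply Polynomial.coeff_eq_zero_of_natDegree_lt
        rw [PP_natDegree]
        omega
      rw [this, mul_zero]
  have hc0 : q.coeff 0 = ee S m κ := by
    rw [hq, Polynomial.hasseDeriv_coeff, zero_add, Nat.choose_self, PP_coeff hmS, Nat.cast_one,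
      one_mul]
  rw [Polynomial.eval_eq_sum_range]
  have h0mem : 0 ∈ Finset.range (q.natDegree + 1) := Finset.mem_range.2 (by omega)
  have := Finset.single_le_sum (f := fun j => q.coeff j * t ^ j)
    (fun j _ => mul_nonneg (hnn j) (pow_nonneg ht j)) h0mem
  simp only [pow_zero, mul_one] at this
  rwa [hc0] at this

lemma Gam_shift {S : Finset ι} {k : ℕ} {κ : ι → ℝ} (hG : Gam S k κ) {t : ℝ} (ht : 0 ≤ t) :
    Gam S k (fun i => κ i + t) :=
  fun m h1 hk => lt_of_lt_of_le (hG m h1 hk) (ee_shift hG ht h1 hk)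

lemma Gam_scale {S : Finset ι} {k : ℕ} {κ : ι → ℝ} {c : ℝ} (hc : 0 < c) (hG : Gam S k κ) :
    Gam S k (fun i => c * κ i) := by
  intro m h1 hk
  rw [ee_smul]
  exact mul_pos (pow_pos hc m) (hG m h1 hk)

lemma Gam_segment {S : Finset ι} {k : ℕ} {κ : ι → ℝ} (hG : Gam S k κ) {s : ℝ}
    (hs0 : 0 < s) (hs1 : s ≤ 1) : Gam S k (fun i => s * κ i + (1 - s)) := by
  have ht : 0 ≤ (1 - s) / s := div_nonneg (by linarith) hs0.le
  have h := Gam_scale hs0 (Gam_shift hG ht)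
  have heq : (fun i => s * (κ i + (1 - s) / s)) = fun i => s * κ i + (1 - s) := by
    funext i
    field_simp
  rwa [heq] at h
theorem Gam_erase (k : ℕ) : ∀ (S : Finset ι) (κ : ι → ℝ) (i : ι), i ∈ S →
    Gam S (k + 1) κ → Gam (S.erase i) k κ := by
  induction k with
  | zero => intro S κ i hi hG m h1 h2; omega
  | succ k ih =>
    intro S κ i hi hG m h1 h2
    rcases lt_or_eq_of_le h2 with hm | hm
    · exact ih S κ i hi (Gam_mono (by omega) hG) m h1 (by omega)
    · subst hm
      set T := S.erase i with hT
      have hcardS : k + 2 ≤ S.card := Gam_le_card hG (by omega)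
      have hcardT : T.card = S.card - 1 := Finset.card_erase_of_mem hi
      have key : ∀ μ : ι → ℝ, Gam S (k + 2) μ → ee T (k + 1) μ ≠ 0 := by
        intro μ hGμ hzero
        have hTk : 0 < ee T k μ := by
          rcases Nat.eq_zero_or_pos k with h0 | h0
          · rw [h0, ee_zero]; norm_num
          · exact ih S μ i hi (Gam_mono (by omega) hGμ) k h0 le_rfl
        have hle : ee T (k + 2) μ ≤ 0 := by
          rcases lt_or_ge T.card (k + 2) with hTc | hTc
          · rw [ee_of_card_lt hTc μ]
          · set p := PP T μ with hp
            have hrr : Multiset.card p.roots = p.natDegree := PP_card_roots T μ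
            set a := T.card - (k + 2) with ha
            set q := (Polynomial.derivative)^[a] p with hqdef
            obtain ⟨hq_rr, hq_deg⟩ := rr_iterate hrr a
            have hdeg : q.natDegree = k + 2 := by
              rw [hqdef, hq_deg, hp, PP_natDegree]; omega
            have hcoeff : ∀ j, j ≤ k + 2 →
                q.coeff j = ((j + a).descFactorial a : ℝ) * ee T (k + 2 - j) μ := by
              intro j hj
              rw [hqdef, Polynomial.coeff_iterate_derivative]
              have heq : j + a = T.card - (k + 2 - j) := by omega
              rw [heq, hp, PP_coeff (by omega), nsmul_eq_mul]
            have h1q : q.coeff 1 = 0 := by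
              rw [hcoeff 1 (by omega), show k + 2 - 1 = k + 1 from by omega, hzero, mul_zero]
            have h2q : 0 < q.coeff 2 := by
              rw [hcoeff 2 (by omega), show k + 2 - 2 = k from by omega]
              have hfac : 0 < (((2 + a).descFactorial a : ℕ) : ℝ) := by
                have : (2 + a).descFactorial a ≠ 0 := fun hc =>
                  absurd (Nat.descFactorial_eq_zero_iff_lt.1 hc) (by omega)
                exact_mod_cast Nat.pos_of_ne_zero this
              exact mul_pos hfac hTk
            have h0q : q.coeff 0 ≤ 0 :=
              coeff_nonpos_of_realRooted hq_rr (by omega) h1q h2q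
            rw [hcoeff 0 (by omega), show k + 2 - 0 = k + 2 from rfl] at h0q
            have hfac : 0 < (((0 + a).descFactorial a : ℕ) : ℝ) := by
              have : (0 + a).descFactorial a ≠ 0 := fun hc =>
                absurd (Nat.descFactorial_eq_zero_iff_lt.1 hc) (by omega)
              exact_mod_cast Nat.pos_of_ne_zero this
            nlinarith
        have hrec : ee S (k + 2) μ = μ i * ee T (k + 1) μ + ee T (k + 2) μ :=
          ee_erase hi (k + 1) μ
        have hpos := hGμ (k + 2) (by omega) le_rfl
        rw [hrec, hzero, mul_zero, zero_add] at hpos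
        linarith
      set f : ℝ → ℝ := fun s => ee T (k + 1) (fun j => s * κ j + (1 - s)) with hf
      have hfcont : Continuous f := by
        apply continuous_finset_sum
        intro t _
        apply continuous_finset_prod
        intro j _
        fun_prop
      have hf0 : f 0 = (T.card.choose (k + 1) : ℝ) := by
        have heq : (fun j => (0 : ℝ) * κ j + (1 - 0)) = fun _ => (1 : ℝ) := by funext j; ring
        rw [hf]
        simp only [heq]
        rw [ee_ones]
      have hf0pos : 0 < f 0 := by
        rw [hf0]
        exact_mod_cast Nat.choose_pos (by omega : k + 1 ≤ T.card)
      have hne : ∀ s : ℝ, 0 < s → s ≤ 1 → f s ≠ 0 := fun s hs0 hs1 =>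
        key _ (Gam_segment hG hs0 hs1)
      have hf1 : f 1 = ee T (k + 1) κ := by
        have heq : (fun j => (1 : ℝ) * κ j + (1 - 1)) = κ := by funext j; ring
        rw [hf]
        simp only [heq]
      by_contra hcon
      push_neg at hcon
      have hf1ne : f 1 ≠ 0 := hne 1 one_pos le_rfl
      have hf1lt : f 1 < 0 := by
        rw [hf1]
        rcases lt_or_eq_of_le hcon with h | h
        · exact h
        · exact absurd (hf1.trans h) hf1ne
      obtain ⟨s0, hs0mem, hs0⟩ : ∃ s0 ∈ Set.Icc (0 : ℝ) 1, f s0 = 0 := by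
        have hiv := intermediate_value_Icc' (by norm_num : (0 : ℝ) ≤ 1) hfcont.continuousOn
        have h0mem : (0 : ℝ) ∈ Set.Icc (f 1) (f 0) := ⟨hf1lt.le, hf0pos.le⟩
        obtain ⟨s0, hs0, hval⟩ := hiv h0mem
        exact ⟨s0, hs0, hval⟩
      have hs0ne : s0 ≠ 0 := fun h => by
        rw [h] at hs0
        rw [hs0] at hf0pos
        exact lt_irrefl _ hf0pos
      exact hne s0 (lt_of_le_of_ne hs0mem.1 (Ne.symm hs0ne)) hs0mem.2 hs0
lemma Gam_erase' {S : Finset ι} {k : ℕ} {κ : ι → ℝ} {i : ι} (hG : Gam S k κ) (hi : i ∈ S) :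
    Gam (S.erase i) (k - 1) κ := by
  cases k with
  | zero => intro m h1 h2; omega
  | succ k => exact Gam_erase k S κ i hi hG

lemma Gam_sdiff {S : Finset ι} {k : ℕ} {κ : ι → ℝ} (hG : Gam S k κ) :
    ∀ (U : Finset ι), U ⊆ S → Gam (S \ U) (k - U.card) κ := by
  intro U
  induction U using Finset.induction_on with
  | empty => intro _; simpa using hG
  | @insert a U ha ih =>
      intro hsub
      have hUS : U ⊆ S := (Finset.subset_insert a U).trans hsub
      have h1 := ih hUS
      have haSU : a ∈ S \ U := Finset.mem_sdiff.2 ⟨hsub (Finset.mem_insert_self a U), ha⟩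
      have h2 := Gam_erase' h1 haSU
      have he : (S \ U).erase a = S \ insert a U := by
        ext x
        simp only [Finset.mem_erase, Finset.mem_sdiff, Finset.mem_insert]
        tauto
      have hc : k - (insert a U).card = k - U.card - 1 := by
        rw [Finset.card_insert_of_notMem ha]; omega
      rw [hc, ← he]
      exact h2

lemma top_pos {S T : Finset ι} {k : ℕ} {κ : ι → ℝ} (hG : Gam S k κ) (hk : 1 ≤ k)
    (hTS : T ⊆ S) (hTcard : T.card = k)
    (htop : ∀ i ∈ T, ∀ j ∈ S \ T, κ j ≤ κ i) : ∀ i ∈ T, 0 < κ i := by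
  intro i hiT
  obtain ⟨i0, hi0T, hi0min⟩ := T.exists_min_image κ ⟨i, hiT⟩
  suffices h : 0 < κ i0 by exact lt_of_lt_of_le h (hi0min i hiT)
  set U := T.erase i0 with hU
  have hUsub : U ⊆ S := (Finset.erase_subset _ _).trans hTS
  have hUcard : U.card = k - 1 := by rw [hU, Finset.card_erase_of_mem hi0T, hTcard]
  have hG1 := Gam_sdiff hG U hUsub
  rw [hUcard] at hG1
  have hpos : 0 < ee (S \ U) 1 κ := hG1 1 le_rfl (by omega)
  rw [ee_one] at hpos
  have hex : ∃ j ∈ S \ U, 0 < κ j := by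
    by_contra hc
    push_neg at hc
    have : ∑ j ∈ S \ U, κ j ≤ 0 := Finset.sum_nonpos hc
    linarith
  obtain ⟨j, hj, hjpos⟩ := hex
  rw [Finset.mem_sdiff] at hj
  obtain ⟨hjS, hjU⟩ := hj
  by_cases hji : j = i0
  · exact hji ▸ hjpos
  · have hjT : j ∉ T := fun hc => hjU (Finset.mem_erase.2 ⟨hji, hc⟩)
    have := htop i0 hi0T j (Finset.mem_sdiff.2 ⟨hjS, hjT⟩)
    linarith

theorem main_finset : ∀ (N : ℕ) (S : Finset ι), S.card = N → ∀ (k : ℕ) (κ : ι → ℝ)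
    (T : Finset ι), Gam S k κ → T ⊆ S → T.card = k →
    (∀ i ∈ T, ∀ j ∈ S \ T, κ j ≤ κ i) →
    ee S k κ ≤ (N.choose k : ℝ) * ∏ i ∈ T, κ i := by
  intro N
  induction N using Nat.strong_induction_on with
  | _ N IH =>
  intro S hS k κ T hG hTS hTcard htop
  rcases Nat.eq_zero_or_pos k with hk0 | hk1
  · subst hk0
    have hT : T = ∅ := Finset.card_eq_zero.1 hTcard
    subst hT
    simp [ee_zero]
  · have hkN : k ≤ N := hS ▸ Gam_le_card hG hk1
    rcases eq_or_lt_of_le hkN with hkeq | hklt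
    · have hTeq : T = S := Finset.eq_of_subset_of_card_le hTS (by omega)
      have h1 : ee S k κ = ∏ x ∈ S, κ x := by
        rw [show k = S.card by omega]
        exact ee_self S κ
      rw [h1, hTeq, hkeq, Nat.choose_self]
      simp
    · have hTne : T.Nonempty := Finset.card_pos.1 (by omega)
      obtain ⟨i, hiT, himax⟩ := T.exists_max_image κ hTne
      have hiS : i ∈ S := hTS hiT
      have hmax : ∀ j ∈ S, κ j ≤ κ i := by
        intro j hj
        by_cases hjT : j ∈ T
        · exact himax j hjT
        · exact htop i hiT j (Finset.mem_sdiff.2 ⟨hj, hjT⟩)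
      set S' := S.erase i with hS'
      set T' := T.erase i with hT'
      have hS'card : S'.card = N - 1 := by rw [hS', Finset.card_erase_of_mem hiS, hS]
      have hT'card : T'.card = k - 1 := by rw [hT', Finset.card_erase_of_mem hiT, hTcard]
      have hT'S' : T' ⊆ S' := Finset.erase_subset_erase i hTS
      have hsdiff : S' \ T' = S \ T := by
        ext x
        simp only [hS', hT', Finset.mem_sdiff, Finset.mem_erase]
        constructor
        · rintro ⟨⟨hxi, hxS⟩, hx2⟩
          exact ⟨hxS, fun hxT => hx2 ⟨hxi, hxT⟩⟩
        · rintro ⟨hxS, hxT⟩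
          exact ⟨⟨fun h => hxT (h ▸ hiT), hxS⟩, fun hc => hxT hc.2⟩
      have htop' : ∀ x ∈ T', ∀ j ∈ S' \ T', κ j ≤ κ x := by
        intro x hx j hj
        rw [hsdiff] at hj
        exact htop x (Finset.mem_of_mem_erase hx) j hj
      have hGS' : Gam S' (k - 1) κ := Gam_erase' hG hiS
      have hposT : ∀ x ∈ T, 0 < κ x := top_pos hG hk1 hTS hTcard htop
      have hκi : 0 < κ i := hposT i hiT
      have hprodT' : 0 < ∏ x ∈ T', κ x :=
        Finset.prod_pos fun x hx => hposT x (Finset.mem_of_mem_erase hx)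
      have hprodT : ∏ x ∈ T, κ x = κ i * ∏ x ∈ T', κ x := (Finset.mul_prod_erase T κ hiT).symm
      have hprodTpos : 0 < ∏ x ∈ T, κ x := Finset.prod_pos hposT
      have hrec : ee S k κ = κ i * ee S' (k - 1) κ + ee S' k κ := by
        have h := ee_erase hiS (k - 1) κ
        rw [show k - 1 + 1 = k from by omega] at h
        exact h
      have hIH1 : ee S' (k - 1) κ ≤ ((N - 1).choose (k - 1) : ℝ) * ∏ x ∈ T', κ x :=
        IH (N - 1) (by omega) S' hS'card (k - 1) κ T' hGS' hT'S' hT'card htop'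
      have hbound1 : κ i * ee S' (k - 1) κ ≤ ((N - 1).choose (k - 1) : ℝ) * ∏ x ∈ T, κ x := by
        calc κ i * ee S' (k - 1) κ
            ≤ κ i * (((N - 1).choose (k - 1) : ℝ) * ∏ x ∈ T', κ x) :=
              mul_le_mul_of_nonneg_left hIH1 hκi.le
          _ = ((N - 1).choose (k - 1) : ℝ) * ∏ x ∈ T, κ x := by rw [hprodT]; ring
      have hchoose : (N.choose k : ℝ) = ((N - 1).choose (k - 1) : ℝ) + ((N - 1).choose k : ℝ) := by
        have hnat : N.choose k = (N - 1).choose (k - 1) + (N - 1).choose k := by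
          have h1 : N - 1 + 1 = N := by omega
          have h2 : k - 1 + 1 = k := by omega
          calc N.choose k = ((N - 1) + 1).choose ((k - 1) + 1) := by rw [h1, h2]
            _ = (N - 1).choose (k - 1) + (N - 1).choose ((k - 1) + 1) :=
                Nat.choose_succ_succ _ _
            _ = (N - 1).choose (k - 1) + (N - 1).choose k := by rw [h2]
        rw [hnat]
        push_cast
        ring
      rcases le_or_gt (ee S' k κ) 0 with hB | hB
      · have hstep : ee S k κ ≤ ((N - 1).choose (k - 1) : ℝ) * ∏ x ∈ T, κ x := by
          rw [hrec]; linarith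
        refine hstep.trans ?_
        rw [hchoose, add_mul]
        have : 0 ≤ ((N - 1).choose k : ℝ) * ∏ x ∈ T, κ x :=
          mul_nonneg (by positivity) hprodTpos.le
        linarith
      · have hGS'k : Gam S' k κ := by
          intro m h1m hmk
          rcases lt_or_eq_of_le hmk with h | h
          · exact hGS' m h1m (by omega)
          · exact h ▸ hB
        have hSTne : (S \ T).Nonempty := by
          apply Finset.card_pos.1
          rw [Finset.card_sdiff_of_subset hTS, hTcard, hS]
          omega
        obtain ⟨j0, hj0, hj0max⟩ := (S \ T).exists_max_image κ hSTne
        have hj0S : j0 ∈ S := (Finset.mem_sdiff.1 hj0).1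
        have hj0T : j0 ∉ T := (Finset.mem_sdiff.1 hj0).2
        have hj0T' : j0 ∉ T' := fun h => hj0T (Finset.mem_of_mem_erase h)
        have hj0i : j0 ≠ i := fun h => hj0T (h ▸ hiT)
        set U := insert j0 T' with hUdef
        have hUcard : U.card = k := by
          rw [hUdef, Finset.card_insert_of_notMem hj0T', hT'card]
          omega
        have hUS' : U ⊆ S' := by
          intro x hx
          rcases Finset.mem_insert.1 hx with h | h
          · subst h
            exact Finset.mem_erase.2 ⟨hj0i, hj0S⟩
          · rw [hT', Finset.mem_erase] at h
            exact Finset.mem_erase.2 ⟨h.1, hTS h.2⟩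
        have htopU : ∀ x ∈ U, ∀ w ∈ S' \ U, κ w ≤ κ x := by
          intro x hx w hw
          rw [Finset.mem_sdiff, hS', Finset.mem_erase] at hw
          obtain ⟨⟨hwi, hwS⟩, hwU⟩ := hw
          have hwj0 : w ≠ j0 := fun h => hwU (h ▸ Finset.mem_insert_self j0 T')
          have hwT' : w ∉ T' := fun h => hwU (Finset.mem_insert_of_mem h)
          have hwT : w ∉ T := fun h => hwT' (Finset.mem_erase.2 ⟨hwi, h⟩)
          have hwst : w ∈ S \ T := Finset.mem_sdiff.2 ⟨hwS, hwT⟩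
          rcases Finset.mem_insert.1 hx with h | h
          · exact h ▸ hj0max w hwst
          · exact htop x (Finset.mem_of_mem_erase h) w hwst
        have hIH2 : ee S' k κ ≤ ((N - 1).choose k : ℝ) * ∏ x ∈ U, κ x :=
          IH (N - 1) (by omega) S' hS'card k κ U hGS'k hUS' hUcard htopU
        have hprodU : ∏ x ∈ U, κ x = κ j0 * ∏ x ∈ T', κ x := Finset.prod_insert hj0T'
        have hprodUle : ∏ x ∈ U, κ x ≤ ∏ x ∈ T, κ x := by
          rw [hprodU, hprodT]
          exact mul_le_mul_of_nonneg_right (hmax j0 hj0S) hprodT'.le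
        have h2 : ee S' k κ ≤ ((N - 1).choose k : ℝ) * ∏ x ∈ T, κ x :=
          hIH2.trans (mul_le_mul_of_nonneg_left hprodUle (by positivity))
        rw [hrec, hchoose, add_mul]
        linarith

theorem esymm_upper_bound (n k : ℕ) (hk : 1 ≤ k) (hkn : k ≤ n)
    (κ : Fin n → ℝ) (hκ : κ ∈ GardingCone n k) (hdec : Antitone κ) :
    esymm n k κ ≤ (n.choose k : ℝ) * ∏ i ∈ Finset.univ.filter (fun i : Fin n => (i : ℕ) < k), κ i := by
  set T : Finset (Fin n) := Finset.univ.filter (fun i : Fin n => (i : ℕ) < k) with hTdef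
  have hmem : ∀ m ∈ Finset.range k, m < n := fun m hm =>
    lt_of_lt_of_le (Finset.mem_range.1 hm) hkn
  have hTeq : T = Finset.attachFin (Finset.range k) hmem := by
    ext i
    rw [hTdef, Finset.mem_filter, Finset.mem_attachFin]
    simp [Finset.mem_range]
  have hTcard : T.card = k := by
    rw [hTeq, Finset.card_attachFin, Finset.card_range]
  have hGam : Gam (Finset.univ : Finset (Fin n)) k κ := fun m h1 h2 => hκ m h1 h2
  have hcard : (Finset.univ : Finset (Fin n)).card = n := by simp
  have htop : ∀ i ∈ T, ∀ j ∈ Finset.univ \ T, κ j ≤ κ i := by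
    intro i hi j hj
    rw [hTdef, Finset.mem_filter] at hi
    rw [Finset.mem_sdiff, hTdef, Finset.mem_filter] at hj
    have hjk : ¬ ((j : ℕ) < k) := fun hc => hj.2 ⟨Finset.mem_univ j, hc⟩
    have : i ≤ j := by
      rw [Fin.le_def]
      omega
    exact hdec this
  have := main_finset n Finset.univ hcard k κ T hGam (Finset.subset_univ T) hTcard htop
  exact this
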